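/- Let M ∈ K^{σ×σ}, E ∈ K^{m×σ}, s ∈ ℕ^m, δ ≥ deg of the minimal polynomial of M. Let (i_1,…,i_r) be the row rank profile of the priority-permuted Krylov matrix K_{δ,s}(E,M), and write i_k = φ(c_k,d_k). Then for every c: (a) for all 0 ≤ d < δ_c, φ(c,d) ∈ {i_1,…,i_r}; (b) δ_c = 0 iff c ∉ {c_1,…,c_r}; (c) if δ_c > 0 then δ_c = 1 + max{d_k : c_k = c}. -/

import Mathlib

open Polynomial Matrix

/-- Priority comparison on pairs `(c,d)`: lexicographic on `(s_c + d, c)`. -/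
def keyLt {m : ℕ} (s : Fin m → ℕ) (x y : Fin m × ℕ) : Prop :=
  s x.1 + x.2 < s y.1 + y.2 ∨ (s x.1 + x.2 = s y.1 + y.2 ∧ x.1 < y.1)

/-- Row `(c,d)` of the priority-permuted Krylov matrix is a linear combination of the
earlier rows. -/
def DepEarlier {K : Type*} [Field K] {m σ : ℕ} (E : Matrix (Fin m) (Fin σ) K)
    (M : Matrix (Fin σ) (Fin σ) K) (s : Fin m → ℕ) (δ : ℕ) (c : Fin m) (d : ℕ) : Prop :=
  Matrix.vecMul (E c) (M ^ d) ∈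
    Submodule.span K
      ((fun y : Fin m × ℕ => Matrix.vecMul (E y.1) (M ^ y.2)) ''
        {y | y.2 ≤ δ ∧ keyLt s y (c, d)})

/-- `dm` is the `s`-minimal degree of `(E,M)`. -/
def IsMinDeg {K : Type*} [Field K] {m σ : ℕ} (E : Matrix (Fin m) (Fin σ) K)
    (M : Matrix (Fin σ) (Fin σ) K) (s : Fin m → ℕ) (δ : ℕ) (dm : Fin m → ℕ) : Prop :=
  ∀ c, DepEarlier E M s δ c (dm c) ∧ ∀ d, d < dm c → ¬ DepEarlier E M s δ c d

/-- The priority-permuted Krylov matrix `K_{δ,s}(E,M)`, with rows indexed by the pairs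
`(c,d)` (the ordering of the rows being given by `keyLt`). -/
def krylovMat {K : Type*} [Field K] {m σ : ℕ} (E : Matrix (Fin m) (Fin σ) K)
    (M : Matrix (Fin σ) (Fin σ) K) (δ : ℕ) :
    Matrix (Fin m × Fin (δ + 1)) (Fin σ) K :=
  Matrix.of fun x j => Matrix.vecMul (E x.1) (M ^ (x.2 : ℕ)) j

/-- `I` is the row rank profile of `A` (rows ordered by the priority order `keyLt`):
the rows indexed by `I` are linearly independent, `I` has cardinality the rank of `A`,
and `I` is lexicographically smallest with these properties: for any other such `J`,
the first position where `I` and `J` disagree belongs to `I`. -/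
def IsRowRankProfile {K : Type*} [Field K] {m σ δ : ℕ} (s : Fin m → ℕ)
    (A : Matrix (Fin m × Fin (δ + 1)) (Fin σ) K)
    (I : Finset (Fin m × Fin (δ + 1))) : Prop :=
  LinearIndependent K (fun x : I => A x.1) ∧ I.card = A.rank ∧
    ∀ J : Finset (Fin m × Fin (δ + 1)),
      LinearIndependent K (fun x : J => A x.1) → J.card = A.rank → J ≠ I →
        ∃ x ∈ I, x ∉ J ∧ ∀ y : Fin m × Fin (δ + 1),
          keyLt s (y.1, (y.2 : ℕ)) (x.1, (x.2 : ℕ)) → (y ∈ I ↔ y ∈ J)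

namespace RRPaux

open Submodule Set

/-- Encode the priority key into a single natural number. -/
def key {m : ℕ} (s : Fin m → ℕ) (x : Fin m × ℕ) : ℕ := (s x.1 + x.2) * m + (x.1 : ℕ)

lemma mul_aux {m a a' c c' : ℕ} (hc : c < m) (h : a < a') :
    a * m + c < a' * m + c' := by
  have h1 : (a + 1) * m ≤ a' * m := Nat.mul_le_mul_right m h
  calc a * m + c < a * m + m := by omega
    _ = (a + 1) * m := by ring
    _ ≤ a' * m := h1
    _ ≤ a' * m + c' := Nat.le_add_right _ _

lemma keyLt_iff {m : ℕ} (s : Fin m → ℕ) (x y : Fin m × ℕ) :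
    keyLt s x y ↔ key s x < key s y := by
  constructor
  · rintro (h | ⟨h1, h2⟩)
    · exact mul_aux x.1.isLt h
    · unfold key; rw [h1]
      have : (x.1 : ℕ) < y.1 := h2
      omega
  · intro h
    rcases lt_trichotomy (s x.1 + x.2) (s y.1 + y.2) with h1 | h1 | h1
    · exact Or.inl h1
    · refine Or.inr ⟨h1, ?_⟩
      unfold key at h; rw [h1] at h
      exact Fin.lt_def.2 (by omega)
    · exact absurd h (lt_asymm (mul_aux y.1.isLt h1))

lemma key_inj {m : ℕ} (s : Fin m → ℕ) {x y : Fin m × ℕ} (h : key s x = key s y) :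
    x.1 = y.1 ∧ x.2 = y.2 := by
  rcases lt_trichotomy (s x.1 + x.2) (s y.1 + y.2) with h1 | h1 | h1
  · exact absurd h (ne_of_lt (mul_aux x.1.isLt h1))
  · unfold key at h; rw [h1] at h
    have hc : x.1 = y.1 := Fin.ext (by omega)
    refine ⟨hc, ?_⟩
    rw [hc] at h1; omega
  · exact absurd h.symm (ne_of_lt (mul_aux y.1.isLt h1))

section Greedy

variable {K V : Type*} [Field K] [AddCommGroup V] [Module K V] {ι : Type*}

lemma greedy_mem_span (κ : ι → ℕ) (v : ι → V) (P : Finset ι)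
    (hP : ∀ x, x ∈ P ↔ v x ∉ span K (v '' {y | κ y < κ x})) :
    ∀ x, v x ∈ span K (v '' {y | y ∈ P ∧ κ y ≤ κ x}) := by
  have main : ∀ n (x : ι), κ x = n → v x ∈ span K (v '' {y | y ∈ P ∧ κ y ≤ κ x}) := by
    intro n
    induction n using Nat.strong_induction_on with
    | _ n ih =>
      intro x hx
      by_cases hxP : x ∈ P
      · exact subset_span ⟨x, ⟨hxP, le_rfl⟩, rfl⟩
      · have hx' : v x ∈ span K (v '' {y | κ y < κ x}) := by
          by_contra h; exact hxP ((hP x).2 h)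
        refine Submodule.span_le.2 ?_ hx'
        rintro _ ⟨y, hy, rfl⟩
        have h1 := ih (κ y) (hx ▸ hy) y rfl
        refine Submodule.span_mono (Set.image_mono ?_) h1
        intro z hz
        exact ⟨hz.1, le_trans hz.2 (le_of_lt hy)⟩
  exact fun x => main (κ x) x rfl

lemma greedy_li (κ : ι → ℕ) (hκ : Function.Injective κ) (v : ι → V) (P : Finset ι)
    (hP : ∀ x, x ∈ P ↔ v x ∉ span K (v '' {y | κ y < κ x})) :
    LinearIndependent K (fun x : P => v x) := by
  classical
  rw [linearIndependent_iff']
  intro t g hg i hi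
  by_contra hgi
  set t' := t.filter (fun j => g j ≠ 0) with ht'
  have hne : t'.Nonempty := ⟨i, Finset.mem_filter.2 ⟨hi, hgi⟩⟩
  obtain ⟨x, hxt, hxmax⟩ := t'.exists_max_image (fun j => κ j.1) hne
  have hgx : g x ≠ 0 := (Finset.mem_filter.1 hxt).2
  have hsum : ∑ j ∈ t', g j • v j.1 = 0 := by
    have heq : ∑ j ∈ t', g j • v j.1 = ∑ j ∈ t, g j • v j.1 := by
      refine Finset.sum_subset (Finset.filter_subset _ _) ?_
      intro j hj hj'
      have : g j = 0 := by
        by_contra h; exact hj' (Finset.mem_filter.2 ⟨hj, h⟩)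
      simp [this]
    exact heq.trans hg
  have hx0 : g x • v x.1 = -∑ j ∈ t'.erase x, g j • v j.1 := by
    have h := Finset.sum_erase_add t' (fun j => g j • v j.1) hxt
    rw [hsum] at h
    exact eq_neg_of_add_eq_zero_right h
  have hmem : (∑ j ∈ t'.erase x, g j • v j.1) ∈ span K (v '' {y | κ y < κ x.1}) := by
    refine Submodule.sum_mem _ ?_
    intro j hj
    refine Submodule.smul_mem _ _ (subset_span ⟨j.1, ?_, rfl⟩)
    have hle : κ j.1 ≤ κ x.1 := hxmax j (Finset.mem_of_mem_erase hj)
    have hne2 : κ j.1 ≠ κ x.1 := by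
      intro h
      exact (Finset.ne_of_mem_erase hj) (Subtype.ext (hκ h))
    exact lt_of_le_of_ne hle hne2
  have hvx : v x.1 ∈ span K (v '' {y | κ y < κ x.1}) := by
    have h : v x.1 = (g x)⁻¹ • (g x • v x.1) := (inv_smul_smul₀ hgx _).symm
    rw [h, hx0]
    exact Submodule.smul_mem _ _ (Submodule.neg_mem _ hmem)
  exact (hP x.1).1 x.2 hvx

end Greedy

variable {K : Type*} [Field K] {m σ : ℕ}

/-- `w ᵥ* ·` as a linear map in the matrix argument. -/
def vmLin (w : Fin σ → K) : Matrix (Fin σ) (Fin σ) K →ₗ[K] (Fin σ → K) where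
  toFun A := Matrix.vecMul w A
  map_add' A B := Matrix.vecMul_add A B w
  map_smul' c A := by
    ext j
    simp [Matrix.vecMul, dotProduct, Finset.mul_sum, mul_left_comm]

lemma vecMul_pow_succ_mem {δ : ℕ} (M : Matrix (Fin σ) (Fin σ) K)
    (hδ : (minpoly K M).natDegree ≤ δ) (w : Fin σ → K) :
    Matrix.vecMul w (M ^ (δ + 1)) ∈
      Submodule.span K (Set.range fun e : Fin (δ + 1) => Matrix.vecMul w (M ^ (e : ℕ))) := by
  rcases subsingleton_or_nontrivial (Matrix (Fin σ) (Fin σ) K) with hss | hnt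
  · have h0 : M ^ (δ + 1) = 0 := Subsingleton.elim _ _
    rw [h0, Matrix.vecMul_zero]; exact zero_mem _
  · have hint : IsIntegral K M := IsIntegral.of_finite K M
    have hmon := minpoly.monic hint
    have hn : 0 < (minpoly K M).natDegree := minpoly.natDegree_pos hint
    set p := minpoly K M with hp
    set n := p.natDegree with hndef
    have h0 : (Polynomial.aeval M) p = 0 := minpoly.aeval K M
    have hs : ∑ i ∈ Finset.range (n + 1), p.coeff i • M ^ i = 0 := by
      rw [← Polynomial.aeval_eq_sum_range]; exact h0
    have hMn : M ^ n = -∑ i ∈ Finset.range n, p.coeff i • M ^ i := by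
      rw [Finset.sum_range_succ, hmon.coeff_natDegree, one_smul] at hs
      exact eq_neg_of_add_eq_zero_right hs
    have h1 : δ + 1 = (δ + 1 - n) + n := by omega
    have hpow : M ^ (δ + 1) = -∑ i ∈ Finset.range n, p.coeff i • M ^ (δ + 1 - n + i) := by
      calc M ^ (δ + 1) = M ^ (δ + 1 - n) * M ^ n := by rw [← pow_add, ← h1]
        _ = M ^ (δ + 1 - n) * (-∑ i ∈ Finset.range n, p.coeff i • M ^ i) := by rw [hMn]
        _ = -∑ i ∈ Finset.range n, p.coeff i • M ^ (δ + 1 - n + i) := by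
            rw [mul_neg, Finset.mul_sum]
            congr 1
            refine Finset.sum_congr rfl fun i _ => ?_
            rw [mul_smul_comm, ← pow_add]
    have hv : Matrix.vecMul w (M ^ (δ + 1)) = vmLin w (M ^ (δ + 1)) := rfl
    rw [hv, hpow, map_neg, map_sum]
    refine Submodule.neg_mem _ (Submodule.sum_mem _ fun i hi => ?_)
    rw [_root_.map_smul]
    refine Submodule.smul_mem _ _ (Submodule.subset_span ?_)
    have hilt : δ + 1 - n + i < δ + 1 := by
      have := Finset.mem_range.1 hi; omega
    exact ⟨⟨δ + 1 - n + i, hilt⟩, rfl⟩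

variable (E : Matrix (Fin m) (Fin σ) K) (M : Matrix (Fin σ) (Fin σ) K) (s : Fin m → ℕ) {δ : ℕ}

lemma dep_top (hδ : (minpoly K M).natDegree ≤ δ) (c : Fin m) :
    DepEarlier E M s δ c (δ + 1) := by
  unfold DepEarlier
  refine Submodule.span_le.2 ?_ (vecMul_pow_succ_mem M hδ (E c))
  rintro _ ⟨e, rfl⟩
  refine Submodule.subset_span ⟨(c, (e : ℕ)), ⟨Nat.lt_succ_iff.1 e.isLt, ?_⟩, rfl⟩
  exact Or.inl (by have := Nat.lt_succ_iff.1 e.isLt; dsimp only; omega)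

lemma dep_succ (hδ : (minpoly K M).natDegree ≤ δ) (c : Fin m) (d : ℕ)
    (h : DepEarlier E M s δ c d) : DepEarlier E M s δ c (d + 1) := by
  unfold DepEarlier at h ⊢
  have h2 := Submodule.mem_map_of_mem (f := M.vecMulLinear) h
  rw [Submodule.map_span] at h2
  have hval : M.vecMulLinear (Matrix.vecMul (E c) (M ^ d)) = Matrix.vecMul (E c) (M ^ (d + 1)) := by
    simp [Matrix.vecMulLinear_apply, Matrix.vecMul_vecMul, ← pow_succ]
  rw [hval] at h2
  refine Submodule.span_le.2 ?_ h2
  rintro _ ⟨_, ⟨⟨c', d'⟩, ⟨hd', hlt⟩, rfl⟩, rfl⟩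
  have hval' : M.vecMulLinear (Matrix.vecMul (E c') (M ^ d')) =
      Matrix.vecMul (E c') (M ^ (d' + 1)) := by
    simp [Matrix.vecMulLinear_apply, Matrix.vecMul_vecMul, ← pow_succ]
  rw [hval']
  rcases lt_or_eq_of_le hd' with hlt' | heq
  · refine Submodule.subset_span ⟨(c', d' + 1), ⟨hlt', ?_⟩, rfl⟩
    rcases hlt with h1 | ⟨h1, h2⟩
    · exact Or.inl (by dsimp only at h1 ⊢; omega)
    · exact Or.inr ⟨by dsimp only at h1 ⊢; omega, h2⟩
  · subst heq
    refine Submodule.span_le.2 ?_ (vecMul_pow_succ_mem M hδ (E c'))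
    rintro _ ⟨e, rfl⟩
    refine Submodule.subset_span ⟨(c', (e : ℕ)), ⟨Nat.lt_succ_iff.1 e.isLt, ?_⟩, rfl⟩
    have he : (e : ℕ) ≤ d' := Nat.lt_succ_iff.1 e.isLt
    rcases hlt with h1 | ⟨h1, _⟩
    · exact Or.inl (by dsimp only at h1 ⊢; omega)
    · exact Or.inl (by dsimp only at h1 ⊢; omega)

lemma dep_mono (hδ : (minpoly K M).natDegree ≤ δ) (c : Fin m) {d d' : ℕ} (hdd : d ≤ d')
    (h : DepEarlier E M s δ c d) : DepEarlier E M s δ c d' := by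
  induction d', hdd using Nat.le_induction with
  | base => exact h
  | succ k hk ih => exact dep_succ E M s hδ c k ih

/-- Bridge between `DepEarlier` and span of earlier rows of the Krylov matrix. -/
lemma dep_iff (x : Fin m × Fin (δ + 1)) :
    DepEarlier E M s δ x.1 (x.2 : ℕ) ↔
      krylovMat E M δ x ∈ Submodule.span K
        ((krylovMat E M δ) '' {y | keyLt s (y.1, (y.2 : ℕ)) (x.1, (x.2 : ℕ))}) := by
  have hset : ((fun y : Fin m × ℕ => Matrix.vecMul (E y.1) (M ^ y.2)) ''
        {y | y.2 ≤ δ ∧ keyLt s y (x.1, (x.2 : ℕ))})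
      = (krylovMat E M δ) '' {y | keyLt s (y.1, (y.2 : ℕ)) (x.1, (x.2 : ℕ))} := by
    ext w
    constructor
    · rintro ⟨⟨c, d⟩, ⟨hd, hlt⟩, rfl⟩
      exact ⟨(c, ⟨d, Nat.lt_succ_of_le hd⟩), hlt, rfl⟩
    · rintro ⟨y, hy, rfl⟩
      exact ⟨(y.1, (y.2 : ℕ)), ⟨Nat.lt_succ_iff.1 y.2.isLt, hy⟩, rfl⟩
  unfold DepEarlier
  rw [hset]
  rfl

/-- The row rank profile is exactly the greedy (earliest-rows) choice. -/
lemma profile_char (I : Finset (Fin m × Fin (δ + 1)))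
    (hI : IsRowRankProfile s (krylovMat E M δ) I) (x : Fin m × Fin (δ + 1)) :
    x ∈ I ↔ krylovMat E M δ x ∉ Submodule.span K
      ((krylovMat E M δ) '' {y | keyLt s (y.1, (y.2 : ℕ)) (x.1, (x.2 : ℕ))}) := by
  classical
  set A := krylovMat E M δ with hA
  set κ : Fin m × Fin (δ + 1) → ℕ := fun x => key s (x.1, (x.2 : ℕ)) with hκdef
  have hκ : Function.Injective κ := by
    intro a b h
    obtain ⟨h1, h2⟩ := key_inj s h
    exact Prod.ext h1 (Fin.ext h2)
  have hsets : ∀ z : Fin m × Fin (δ + 1),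
      {y : Fin m × Fin (δ + 1) | keyLt s (y.1, (y.2 : ℕ)) (z.1, (z.2 : ℕ))}
        = {y | κ y < κ z} := by
    intro z; ext y; exact keyLt_iff s (y.1, (y.2 : ℕ)) (z.1, (z.2 : ℕ))
  set P : Finset (Fin m × Fin (δ + 1)) :=
    Finset.univ.filter (fun z => A z ∉ Submodule.span K (A '' {y | κ y < κ z})) with hPdef
  have hP : ∀ z, z ∈ P ↔ A z ∉ Submodule.span K (A '' {y | κ y < κ z}) := by
    intro z; simp [hPdef]
  suffices hIP : I = P by
    rw [hIP, hP, hsets]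
  by_contra hne
  have liP : LinearIndependent K (fun z : P => A z.1) := greedy_li κ hκ A P hP
  have hspan : ∀ z, A z ∈ Submodule.span K (A '' ↑P) := by
    intro z
    refine Submodule.span_mono (Set.image_mono ?_) (greedy_mem_span κ A P hP z)
    intro w hw; exact hw.1
  have hspan2 : Submodule.span K (Set.range A) = Submodule.span K (A '' ↑P) := by
    apply le_antisymm
    · rw [Submodule.span_le]; rintro _ ⟨z, rfl⟩; exact hspan z
    · exact Submodule.span_mono (Set.image_subset_range _ _)
  have cardP : P.card = A.rank := by
    have h1 := linearIndependent_iff_card_eq_finrank_span.mp liP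
    have h2 : Set.range (fun z : P => A z.1) = A '' ↑P := by
      ext w; constructor
      · rintro ⟨z, rfl⟩; exact ⟨z.1, z.2, rfl⟩
      · rintro ⟨z, hz, rfl⟩; exact ⟨⟨z, hz⟩, rfl⟩
    rw [Fintype.card_coe, h2, Set.finrank] at h1
    rw [Matrix.rank_eq_finrank_span_row]
    change P.card = Module.finrank K (Submodule.span K (Set.range A))
    rw [hspan2]
    exact h1
  obtain ⟨x', hx'I, hx'P, hagree⟩ := hI.2.2 P liP cardP (fun h => hne h.symm)
  have hx'dep : A x' ∈ Submodule.span K (A '' {y | κ y < κ x'}) := by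
    by_contra h; exact hx'P ((hP x').2 h)
  have hcut : Submodule.span K (A '' {y | κ y < κ x'})
      = Submodule.span K (A '' {y | y ∈ P ∧ κ y < κ x'}) := by
    apply le_antisymm
    · rw [Submodule.span_le]
      rintro _ ⟨z, hz, rfl⟩
      refine Submodule.span_mono (Set.image_mono ?_) (greedy_mem_span κ A P hP z)
      intro w hw
      exact ⟨hw.1, lt_of_le_of_lt hw.2 hz⟩
    · exact Submodule.span_mono (Set.image_mono fun w hw => hw.2)
  have hsetsPI : {y | y ∈ P ∧ κ y < κ x'} = {y | y ∈ I ∧ κ y < κ x'} := by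
    ext y
    constructor
    · rintro ⟨hyP, hyk⟩
      exact ⟨(hagree y ((keyLt_iff s _ _).2 hyk)).2 hyP, hyk⟩
    · rintro ⟨hyI, hyk⟩
      exact ⟨(hagree y ((keyLt_iff s _ _).2 hyk)).1 hyI, hyk⟩
  rw [hcut, hsetsPI] at hx'dep
  have himg : A '' {y | y ∈ I ∧ κ y < κ x'}
      = (fun z : I => A z.1) '' {z : I | κ z.1 < κ x'} := by
    ext w; constructor
    · rintro ⟨z, ⟨hzI, hzk⟩, rfl⟩; exact ⟨⟨z, hzI⟩, hzk, rfl⟩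
    · rintro ⟨z, hz, rfl⟩; exact ⟨z.1, ⟨z.2, hz⟩, rfl⟩
  rw [himg] at hx'dep
  exact hI.1.notMem_span_image (x := (⟨x', hx'I⟩ : I))
    (by simp only [Set.mem_setOf_eq]; exact lt_irrefl _) hx'dep

end RRPaux

open scoped Classical in
/-- relations between the row rank profile of the priority-permuted
Krylov matrix and the `s`-minimal degree `(δ_1,…,δ_m)`:
(a) all rows `(c,d)` with `d < δ_c` belong to the profile;
(b) `δ_c = 0` iff no element of the profile has first component `c`;
(c) if `δ_c > 0` then `δ_c = 1 + max{d : (c,d) in the profile}`. -/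
theorem rowRankProfile_minimal_degree
    {K : Type*} [Field K] {m σ δ : ℕ}
    (M : Matrix (Fin σ) (Fin σ) K) (E : Matrix (Fin m) (Fin σ) K) (s : Fin m → ℕ)
    (hδ : (minpoly K M).natDegree ≤ δ)
    (dm : Fin m → ℕ) (hdm : IsMinDeg E M s δ dm)
    (I : Finset (Fin m × Fin (δ + 1)))
    (hI : IsRowRankProfile s (krylovMat E M δ) I) :
    ∀ c : Fin m,
      (∀ d : Fin (δ + 1), (d : ℕ) < dm c → (c, d) ∈ I) ∧
      (dm c = 0 ↔ ∀ x ∈ I, x.1 ≠ c) ∧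
      (0 < dm c →
        dm c = 1 + (I.filter fun x => x.1 = c).sup fun x => (x.2 : ℕ)) := by
  intro c
  have hchar : ∀ x : Fin m × Fin (δ + 1), x ∈ I ↔ ¬ DepEarlier E M s δ x.1 (x.2 : ℕ) := by
    intro x
    rw [RRPaux.profile_char E M s I hI x, RRPaux.dep_iff E M s x]
  have hdmle : dm c ≤ δ + 1 := by
    by_contra h
    exact (hdm c).2 (δ + 1) (by omega) (RRPaux.dep_top E M s hδ c)
  have ha : ∀ d : Fin (δ + 1), (d : ℕ) < dm c → (c, d) ∈ I := by
    intro d hd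
    exact (hchar (c, d)).2 ((hdm c).2 _ hd)
  have hdep_ge : ∀ d, dm c ≤ d → DepEarlier E M s δ c d := by
    intro d hd
    exact RRPaux.dep_mono E M s hδ c hd (hdm c).1
  refine ⟨ha, ⟨?_, ?_⟩, ?_⟩
  · intro h0 x hxI hx1
    have : ¬ DepEarlier E M s δ x.1 (x.2 : ℕ) := (hchar x).1 hxI
    rw [hx1] at this
    exact this (hdep_ge _ (by omega))
  · intro hno
    by_contra h0
    exact hno (c, (0 : Fin (δ + 1))) (ha 0 (by simp only [Fin.val_zero]; omega)) rfl
  · intro hpos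
    have hsub : dm c - 1 < δ + 1 := by omega
    have hmem : (c, (⟨dm c - 1, hsub⟩ : Fin (δ + 1))) ∈ I := ha _ (by simp; omega)
    have hle : (I.filter fun x => x.1 = c).sup (fun x => (x.2 : ℕ)) ≤ dm c - 1 := by
      refine Finset.sup_le ?_
      intro x hx
      obtain ⟨hxI, hx1⟩ := Finset.mem_filter.1 hx
      have hnd : ¬ DepEarlier E M s δ x.1 (x.2 : ℕ) := (hchar x).1 hxI
      rw [hx1] at hnd
      by_contra hgt
      exact hnd (hdep_ge _ (by omega))
    have hge : dm c - 1 ≤ (I.filter fun x => x.1 = c).sup (fun x => (x.2 : ℕ)) := by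
      have : (c, (⟨dm c - 1, hsub⟩ : Fin (δ + 1))) ∈ I.filter fun x => x.1 = c :=
        Finset.mem_filter.2 ⟨hmem, rfl⟩
      exact Finset.le_sup (f := fun x => ((x.2 : ℕ))) this
    omega
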